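/- (Quantitative core of Theorem 2.) Let (Ω, 𝓕, P) be a probability space, B > 0, ε ≥ 0, and δ ∈ [0,1]. Let X, Y : Ω → ℝ be measurable with |X| ≤ B and |Y| ≤ B almost surely. Suppose A ∈ 𝓕 is an event with P(Aᶜ) ≤ δ, and there are constants x, y ∈ ℝ with |x| ≤ B and |y| ≤ B such that |X − x| ≤ ε and |Y − y| ≤ ε almost surely on A. Then |Cov(X,Y)| ≤ 4·ε² + 16·B²·δ. -/

import Mathlib

open MeasureTheory

lemma abs_integral_le_aux {Ω : Type*} {𝓕 : MeasurableSpace Ω} (P : Measure Ω)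
    [IsProbabilityMeasure P] {f : Ω → ℝ} (hf : Integrable f P)
    {A : Set Ω} (hA : MeasurableSet A) {c d : ℝ} (hc : 0 ≤ c) (hd : 0 ≤ d)
    (hfa : ∀ᵐ ω ∂P, ω ∈ A → |f ω| ≤ c) (hfd : ∀ᵐ ω ∂P, |f ω| ≤ d) :
    |∫ ω, f ω ∂P| ≤ c + d * (P Aᶜ).toReal := by
  have hg : Integrable (fun ω => A.indicator (fun _ => c) ω + Aᶜ.indicator (fun _ => d) ω) P :=
    ((integrable_const c).indicator hA).add ((integrable_const d).indicator hA.compl)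
  have hmono : ∀ᵐ ω ∂P, |f ω| ≤ A.indicator (fun _ => c) ω + Aᶜ.indicator (fun _ => d) ω := by
    filter_upwards [hfa, hfd] with ω h1 h2
    by_cases hω : ω ∈ A
    · have : ω ∉ Aᶜ := by simp [hω]
      simp [Set.indicator_of_mem hω, Set.indicator_of_notMem this, h1 hω]
    · have : ω ∈ Aᶜ := hω
      simp [Set.indicator_of_notMem hω, Set.indicator_of_mem this, h2]
  have h1 : |∫ ω, f ω ∂P| ≤ ∫ ω, |f ω| ∂P := by
    simpa [Real.norm_eq_abs] using norm_integral_le_integral_norm (μ := P) f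
  have h2 : ∫ ω, |f ω| ∂P ≤ ∫ ω, (A.indicator (fun _ => c) ω + Aᶜ.indicator (fun _ => d) ω) ∂P :=
    integral_mono_ae hf.abs hg hmono
  have h3 : ∫ ω, (A.indicator (fun _ => c) ω + Aᶜ.indicator (fun _ => d) ω) ∂P
      = (P A).toReal * c + (P Aᶜ).toReal * d := by
    rw [integral_add ((integrable_const c).indicator hA) ((integrable_const d).indicator hA.compl),
      integral_indicator_const _ hA, integral_indicator_const _ hA.compl]
    simp [smul_eq_mul, measureReal_def]
  have h4 : (P A).toReal ≤ 1 := by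
    simpa using ENNReal.toReal_mono ENNReal.one_ne_top (prob_le_one (μ := P) (s := A))
  have h5 : 0 ≤ (P Aᶜ).toReal := ENNReal.toReal_nonneg
  nlinarith [h1, h2, h3, h4, h5, hc, hd]

theorem abs_cov_le_of_close_on_good_event
    {Ω : Type*} {𝓕 : MeasurableSpace Ω} (P : Measure Ω) [IsProbabilityMeasure P]
    (B : ℝ) (hB : 0 < B) (ε : ℝ) (hε : 0 ≤ ε)
    (δ : ℝ) (hδ0 : 0 ≤ δ) (hδ1 : δ ≤ 1)
    (X Y : Ω → ℝ) (hX : Measurable X) (hY : Measurable Y)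
    (hXb : ∀ᵐ ω ∂P, |X ω| ≤ B) (hYb : ∀ᵐ ω ∂P, |Y ω| ≤ B)
    (A : Set Ω) (hA : MeasurableSet A) (hPA : (P Aᶜ).toReal ≤ δ)
    (x y : ℝ) (hx : |x| ≤ B) (hy : |y| ≤ B)
    (hXA : ∀ᵐ ω ∂P, ω ∈ A → |X ω - x| ≤ ε)
    (hYA : ∀ᵐ ω ∂P, ω ∈ A → |Y ω - y| ≤ ε) :
    |(∫ ω, X ω * Y ω ∂P) - (∫ ω, X ω ∂P) * (∫ ω, Y ω ∂P)|
      ≤ 4 * ε ^ 2 + 16 * B ^ 2 * δ := by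
  -- integrability
  have hXi : Integrable X P := by
    refine (integrable_const B).mono' hX.aestronglyMeasurable ?_
    filter_upwards [hXb] with ω h using by simpa [Real.norm_eq_abs] using h
  have hYi : Integrable Y P := by
    refine (integrable_const B).mono' hY.aestronglyMeasurable ?_
    filter_upwards [hYb] with ω h using by simpa [Real.norm_eq_abs] using h
  have hXYi : Integrable (fun ω => X ω * Y ω) P := by
    refine (integrable_const (B * B)).mono' (hX.mul hY).aestronglyMeasurable ?_
    filter_upwards [hXb, hYb] with ω h1 h2
    simpa [Real.norm_eq_abs, abs_mul] using
      mul_le_mul h1 h2 (abs_nonneg _) hB.le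
  have hfi : Integrable (fun ω => (X ω - x) * (Y ω - y)) P := by
    have : (fun ω => (X ω - x) * (Y ω - y))
        = fun ω => X ω * Y ω - y * X ω - x * Y ω + x * y := by
      funext ω; ring
    rw [this]
    have i2 : Integrable (fun ω => y * X ω) P := hXi.const_mul y
    have i1 : Integrable (fun ω => x * Y ω) P := hYi.const_mul x
    have i3 : Integrable (fun ω => X ω * Y ω - y * X ω) P := by exact hXYi.sub i2
    have i4 : Integrable (fun ω => X ω * Y ω - y * X ω - x * Y ω) P := by exact i3.sub i1
    exact i4.add (integrable_const (x * y))
  -- bound on E[(X−x)(Y−y)]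
  have h1 : |∫ ω, (X ω - x) * (Y ω - y) ∂P| ≤ ε ^ 2 + 4 * B ^ 2 * (P Aᶜ).toReal := by
    have := abs_integral_le_aux P hfi hA (c := ε ^ 2) (d := 4 * B ^ 2)
      (by positivity) (by positivity) ?_ ?_
    · simpa using this
    · filter_upwards [hXA, hYA] with ω h1 h2 hω
      have := mul_le_mul (h1 hω) (h2 hω) (abs_nonneg _) hε
      calc |(X ω - x) * (Y ω - y)| = |X ω - x| * |Y ω - y| := abs_mul _ _
        _ ≤ ε * ε := mul_le_mul (h1 hω) (h2 hω) (abs_nonneg _) hε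
        _ = ε ^ 2 := by ring
    · filter_upwards [hXb, hYb] with ω h1 h2
      have hx1 : |X ω - x| ≤ 2 * B := by
        calc |X ω - x| ≤ |X ω| + |x| := abs_sub _ _
          _ ≤ B + B := add_le_add h1 hx
          _ = 2 * B := by ring
      have hy1 : |Y ω - y| ≤ 2 * B := by
        calc |Y ω - y| ≤ |Y ω| + |y| := abs_sub _ _
          _ ≤ B + B := add_le_add h2 hy
          _ = 2 * B := by ring
      calc |(X ω - x) * (Y ω - y)| = |X ω - x| * |Y ω - y| := abs_mul _ _
        _ ≤ (2 * B) * (2 * B) := mul_le_mul hx1 hy1 (abs_nonneg _) (by positivity)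
        _ = 4 * B ^ 2 := by ring
  -- bounds on |E X − x|, |E Y − y|
  have h2 : |∫ ω, (X ω - x) ∂P| ≤ ε + 2 * B * (P Aᶜ).toReal := by
    refine abs_integral_le_aux P (hXi.sub (integrable_const x)) hA hε (by positivity) ?_ ?_
    · exact hXA
    · filter_upwards [hXb] with ω h
      calc |X ω - x| ≤ |X ω| + |x| := abs_sub _ _
        _ ≤ B + B := add_le_add h hx
        _ = 2 * B := by ring
  have h3 : |∫ ω, (Y ω - y) ∂P| ≤ ε + 2 * B * (P Aᶜ).toReal := by
    refine abs_integral_le_aux P (hYi.sub (integrable_const y)) hA hε (by positivity) ?_ ?_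
    · exact hYA
    · filter_upwards [hYb] with ω h
      calc |Y ω - y| ≤ |Y ω| + |y| := abs_sub _ _
        _ ≤ B + B := add_le_add h hy
        _ = 2 * B := by ring
  -- algebraic identities
  have hIx : ∫ ω, (X ω - x) ∂P = (∫ ω, X ω ∂P) - x := by
    rw [integral_sub hXi (integrable_const x)]; simp
  have hIy : ∫ ω, (Y ω - y) ∂P = (∫ ω, Y ω ∂P) - y := by
    rw [integral_sub hYi (integrable_const y)]; simp
  have hprod : ∫ ω, (X ω - x) * (Y ω - y) ∂P
      = (∫ ω, X ω * Y ω ∂P) - y * (∫ ω, X ω ∂P) - x * (∫ ω, Y ω ∂P) + x * y := by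
    have heq : (fun ω => (X ω - x) * (Y ω - y))
        = fun ω => X ω * Y ω - y * X ω - x * Y ω + x * y := by
      funext ω; ring
    have i2 : Integrable (fun ω => y * X ω) P := hXi.const_mul y
    have i1 : Integrable (fun ω => x * Y ω) P := hYi.const_mul x
    have i3 : Integrable (fun ω => X ω * Y ω - y * X ω) P := by exact hXYi.sub i2
    have i4 : Integrable (fun ω => X ω * Y ω - y * X ω - x * Y ω) P := by exact i3.sub i1
    rw [heq, integral_add i4 (integrable_const (x * y)),
      integral_sub i3 i1, integral_sub hXYi i2, integral_const_mul, integral_const_mul]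
    simp
  -- combine
  set I := ∫ ω, X ω * Y ω ∂P
  set Ix := ∫ ω, X ω ∂P
  set Iy := ∫ ω, Y ω ∂P
  have key : I - Ix * Iy = (∫ ω, (X ω - x) * (Y ω - y) ∂P) - (Ix - x) * (Iy - y) := by
    rw [hprod]; ring
  rw [key]
  have habs : |(∫ ω, (X ω - x) * (Y ω - y) ∂P) - (Ix - x) * (Iy - y)|
      ≤ |∫ ω, (X ω - x) * (Y ω - y) ∂P| + |Ix - x| * |Iy - y| := by
    calc _ ≤ |∫ ω, (X ω - x) * (Y ω - y) ∂P| + |(Ix - x) * (Iy - y)| := abs_sub _ _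
      _ = _ := by rw [abs_mul]
  have h2' : |Ix - x| ≤ ε + 2 * B * (P Aᶜ).toReal := by rw [← hIx]; exact h2
  have h3' : |Iy - y| ≤ ε + 2 * B * (P Aᶜ).toReal := by rw [← hIy]; exact h3
  have hcd : 0 ≤ (P Aᶜ).toReal := ENNReal.toReal_nonneg
  have hprodbd : |Ix - x| * |Iy - y| ≤ (ε + 2 * B * (P Aᶜ).toReal) ^ 2 := by
    calc |Ix - x| * |Iy - y| ≤ (ε + 2 * B * (P Aᶜ).toReal) * (ε + 2 * B * (P Aᶜ).toReal) :=
      mul_le_mul h2' h3' (abs_nonneg _) (by positivity)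
      _ = _ := by ring
  have hδ2 : (P Aᶜ).toReal ^ 2 ≤ δ := by
    nlinarith [hcd, hPA, hδ0, hδ1]
  nlinarith [habs, h1, hprodbd, hPA, hcd, hB, hε, hδ2,
    sq_nonneg (ε - 2 * B * (P Aᶜ).toReal), sq_nonneg B,
    mul_le_mul_of_nonneg_left hPA (sq_nonneg B),
    mul_le_mul_of_nonneg_left hδ2 (sq_nonneg B)]
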